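/- e^2 is irrational. -/

import Mathlib

open Finset Real

namespace ESqAux

/-- The tail bound constant. -/
noncomputable def B (n : ℕ) : ℝ := (n + 1) / (Nat.factorial n * n)

lemma cast_fact_div {n i : ℕ} (h : i < n) :
    ((Nat.factorial (n - 1) / Nat.factorial i : ℕ) : ℝ) =
      (Nat.factorial (n - 1) : ℝ) / (Nat.factorial i : ℝ) := by
  have hdvd : Nat.factorial i ∣ Nat.factorial (n - 1) :=
    Nat.factorial_dvd_factorial (by omega)
  exact Nat.cast_div hdvd (by positivity)

set_option maxHeartbeats 2000000 in
lemma key (a b : ℕ) (hb : 0 < b) (hkey : (b : ℝ) * Real.exp 1 = a * Real.exp (-1)) :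
    False := by
  set c : ℕ := a + b with hc
  set n : ℕ := 2 * c + 3 with hn
  clear_value c n
  have hn0 : 0 < n := by omega
  have hn1 : (1:ℕ) ≤ n - 1 := by omega
  set m : ℝ := (Nat.factorial (n - 1) : ℝ) with hm
  clear_value m
  have hm0 : 0 < m := by rw [hm]; positivity
  have hfacn : (Nat.factorial n : ℝ) = n * m := by
    rw [hm]
    rw [show n = (n-1) + 1 by omega]
    push_cast [Nat.factorial_succ]
    ring_nf
  set s : ℝ := ∑ i ∈ range n, (1:ℝ) / Nat.factorial i with hs
  set t : ℝ := ∑ i ∈ range n, (-1:ℝ) ^ i / Nat.factorial i with ht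
  set R : ℝ := Real.exp 1 - s with hR
  set R' : ℝ := Real.exp (-1) - t with hR'
  clear_value s t R R'
  -- integrality
  set S : ℤ := ∑ i ∈ range n, ((Nat.factorial (n - 1) / Nat.factorial i : ℕ) : ℤ) with hS
  set T : ℤ := ∑ i ∈ range n, (-1) ^ i * ((Nat.factorial (n - 1) / Nat.factorial i : ℕ) : ℤ)
    with hT
  clear_value S T
  have hScast : (S : ℝ) = m * s := by
    rw [hS, hs, Finset.mul_sum]
    simp only [Int.cast_sum, Int.cast_natCast]
    refine Finset.sum_congr rfl fun i hi => ?_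
    rw [cast_fact_div (Finset.mem_range.mp hi), hm]
    ring
  have hTcast : (T : ℝ) = m * t := by
    rw [hT, ht, Finset.mul_sum]
    simp only [Int.cast_sum, Int.cast_mul, Int.cast_pow, Int.cast_neg, Int.cast_one,
      Int.cast_natCast]
    refine Finset.sum_congr rfl fun i hi => ?_
    rw [cast_fact_div (Finset.mem_range.mp hi), hm]
    ring
  set z : ℤ := (b : ℤ) * S - (a : ℤ) * T with hz
  clear_value z
  have hzval : (z : ℝ) = m * ((a : ℝ) * R' - (b : ℝ) * R) := by
    have h1 : (b : ℝ) * (s + R) = (a : ℝ) * (t + R') := by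
      rw [hR, hR']; ring_nf
      ring_nf at hkey
      linarith [hkey]
    push_cast [hz]
    rw [hScast, hTcast]
    nlinarith [h1]
  -- bounds
  have hBval : m * B n = (n + 1) / ((n : ℝ) * n) := by
    rw [B, hfacn]
    field_simp
  have hRub : |R| ≤ B n := by
    have := Real.exp_bound (x := 1) (by norm_num) hn0
    simpa [hR, hs, B] using this
  have hR'ub : |R'| ≤ B n := by
    have := Real.exp_bound (x := -1) (by norm_num) hn0
    simpa [hR', ht, B] using this
  have hnodd : (-1 : ℝ) ^ n = -1 := Odd.neg_one_pow ⟨c + 1, by omega⟩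
  have hRlb : 1 / (Nat.factorial n : ℝ) ≤ R := by
    have h := Real.sum_le_exp_of_nonneg (x := 1) zero_le_one (n + 1)
    rw [Finset.sum_range_succ] at h
    simp only [one_pow] at h
    rw [hR, hs]
    linarith [h]
  have hRpos : 0 < R := lt_of_lt_of_le (by positivity) hRlb
  have hR'neg : R' < 0 := by
    have h := Real.exp_bound (x := -1) (by norm_num) (n := n + 1) (by omega)
    rw [Finset.sum_range_succ] at h
    have habs : |(-1:ℝ)| = 1 := by norm_num
    rw [habs] at h
    simp only [one_pow, one_mul] at h
    rw [← ht] at h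
    have hsum : Real.exp (-1) - (t + (-1:ℝ)^n / Nat.factorial n) = R' + 1 / Nat.factorial n := by
      rw [hR', hnodd]; ring
    rw [hsum] at h
    have h2 := (abs_le.mp h).2
    -- need (n+2)/((n+1)! * (n+1)) < 1/n!
    have hfact : (Nat.factorial (n + 1) : ℝ) = (n + 1) * Nat.factorial n := by
      push_cast [Nat.factorial_succ]; ring
    have hfn : (0:ℝ) < Nat.factorial n := by positivity
    have hnR : (3:ℝ) ≤ n := by exact_mod_cast show (3:ℕ) ≤ n by omega
    have hstrict : ((n:ℝ) + 1 + 1) / (Nat.factorial (n + 1) * (n + 1)) <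
        1 / Nat.factorial n := by
      rw [hfact, div_lt_div_iff₀ (by positivity) hfn]
      have hq : ((n:ℝ) + 1 + 1) < ((n:ℝ) + 1) * ((n:ℝ) + 1) := by nlinarith
      nlinarith [mul_lt_mul_of_pos_right hq hfn]
    push_cast at h2 hstrict
    linarith
  -- z is a negative integer
  have hbR : (1:ℝ) ≤ b := by exact_mod_cast hb
  have hzneg : (z : ℝ) < 0 := by
    rw [hzval]
    have h1 : (a : ℝ) * R' ≤ 0 := mul_nonpos_of_nonneg_of_nonpos (by positivity) hR'neg.le
    have h2 : 0 < (b : ℝ) * R := mul_pos (by exact_mod_cast hb) hRpos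
    nlinarith
  have hzle : (z : ℝ) ≤ -1 := by
    have hzZ : z < 0 := by exact_mod_cast hzneg
    have h1 : z ≤ -1 := by omega
    have h2 : ((z : ℤ) : ℝ) ≤ ((-1 : ℤ) : ℝ) := Int.cast_le.mpr h1
    simpa using h2
  -- but |z| < 1
  have hzlb : -1 < (z : ℝ) := by
    have hBpos : 0 < B n := by rw [B]; positivity
    have h1 : (z : ℝ) ≥ m * ((a : ℝ) * (-(B n)) - (b : ℝ) * B n) := by
      rw [hzval]
      have ha1 : -(B n) ≤ R' := (abs_le.mp hR'ub).1
      have hb1 : R ≤ B n := (abs_le.mp hRub).2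
      have ha2 : (a : ℝ) * (-(B n)) ≤ (a : ℝ) * R' :=
        mul_le_mul_of_nonneg_left ha1 (Nat.cast_nonneg a)
      have hb2 : (b : ℝ) * R ≤ (b : ℝ) * B n :=
        mul_le_mul_of_nonneg_left hb1 (Nat.cast_nonneg b)
      have hd : (a : ℝ) * (-(B n)) - (b : ℝ) * B n ≤ (a : ℝ) * R' - (b : ℝ) * R := by
        linarith
      exact mul_le_mul_of_nonneg_left hd hm0.le
    have h2 : m * ((a : ℝ) * (-(B n)) - (b : ℝ) * B n) = -((c : ℝ) * (m * B n)) := by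
      rw [hc]; push_cast; ring
    have h3 : (c : ℝ) * (m * B n) < 1 := by
      rw [hBval]
      have hnR : (n : ℝ) = 2 * c + 3 := by exact_mod_cast hn
      have hc0 : (0:ℝ) ≤ c := by positivity
      have hnn : (0:ℝ) < (n:ℝ) * n := by nlinarith
      rw [← mul_div_assoc, div_lt_one hnn, hnR]
      nlinarith
    linarith
  linarith

end ESqAux

theorem e_sq_irrational : Irrational (Real.exp 1 ^ 2) := by
  rintro ⟨q, hq⟩
  have hq0 : (0 : ℝ) < q := by rw [hq]; positivity
  have hnum : 0 < q.num := Rat.num_pos.mpr (by exact_mod_cast hq0)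
  set a : ℕ := q.num.toNat with ha
  set b : ℕ := q.den with hb
  have hb0 : 0 < b := q.pos
  have haq : (a : ℝ) = q * b := by
    have h1 : ((a : ℕ) : ℝ) = (q.num : ℝ) := by
      rw [ha]; exact_mod_cast Int.toNat_of_nonneg hnum.le
    rw [h1, Rat.cast_def]
    field_simp
    rw [hb]
  have hexp : Real.exp 1 * Real.exp (-1) = 1 := by
    rw [← Real.exp_add]; norm_num
  have hkey : (b : ℝ) * Real.exp 1 = a * Real.exp (-1) := by
    have : (b : ℝ) * Real.exp 1 * (Real.exp 1 * Real.exp (-1)) =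
        (b : ℝ) * (Real.exp 1 ^ 2) * Real.exp (-1) := by ring
    rw [hexp, mul_one, ← hq] at this
    rw [this, haq]
    ring
  exact ESqAux.key a b hb0 hkey
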